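/- The subspace of formal Laurent series in p containing only powers p^j with j ≥ 1, and the complementary subspace of powers p^j with j ≤ 0, are both Lie subalgebras with respect to the contact bracket. -/
import Mathlib


/-- Partial derivative in `x` of a coefficient function of `(x, z)`. -/
noncomputable def cdX (w : ℝ → ℝ → ℝ) : ℝ → ℝ → ℝ :=
  fun x z => deriv (fun q => w q z) x

/-- Partial derivative in `z` of a coefficient function of `(x, z)`. -/
noncomputable def cdZ (w : ℝ → ℝ → ℝ) : ℝ → ℝ → ℝ :=
  fun x z => deriv (fun q => w x q) z

/-- Coefficient at `p^k` of the contact bracket `{f, g}_C` of the formal Laurent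
series `f = Σᵢ u i · pⁱ` and `g = Σⱼ v j · pʲ` whose coefficients are functions
of `(x, z)`:
`{f,g}_C = f_p g_x − p f_p g_z + f g_z − (g_p f_x − p g_p f_z + g f_z)`. -/
noncomputable def cbCoeff (u v : ℤ → ℝ → ℝ → ℝ) (k : ℤ) : ℝ → ℝ → ℝ :=
  fun x z =>
    ∑ᶠ i : ℤ,
      ((i : ℝ) * u i x z * cdX (v (k + 1 - i)) x z
        - (i : ℝ) * u i x z * cdZ (v (k - i)) x z
        + u i x z * cdZ (v (k - i)) x z
        - ((i : ℝ) * v i x z * cdX (u (k + 1 - i)) x z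
            - (i : ℝ) * v i x z * cdZ (u (k - i)) x z
            + v i x z * cdZ (u (k - i)) x z))

/-- The subspace of formal Laurent series with only powers `p^j`, `j ≥ 1`, and
the complementary subspace with powers `p^j`, `j ≤ 0`, are both closed under
the contact bracket. -/
lemma cdX_zero : cdX (0 : ℝ → ℝ → ℝ) = 0 := by
  funext x z; simp [cdX]

lemma cdZ_zero : cdZ (0 : ℝ → ℝ → ℝ) = 0 := by
  funext x z; simp [cdZ]

theorem stmt11 :
    (∀ u v : ℤ → ℝ → ℝ → ℝ, {i | u i ≠ 0}.Finite → {i | v i ≠ 0}.Finite →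
      (∀ i, i < 1 → u i = 0) → (∀ i, i < 1 → v i = 0) →
      ∀ k, k < 1 → cbCoeff u v k = 0) ∧
    (∀ u v : ℤ → ℝ → ℝ → ℝ, {i | u i ≠ 0}.Finite → {i | v i ≠ 0}.Finite →
      (∀ i, 0 < i → u i = 0) → (∀ i, 0 < i → v i = 0) →
      ∀ k, 0 < k → cbCoeff u v k = 0) := by
  constructor
  · intro u v _ _ hu hv k hk
    funext x z
    show (∑ᶠ i : ℤ, _) = (0 : ℝ → ℝ → ℝ) x z
    rw [finsum_eq_zero_of_forall_eq_zero]
    · rfl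
    intro i
    by_cases hi : i < 1
    · rw [hu i hi, hv i hi]; simp
    · push_neg at hi
      have h1 : k + 1 - i < 1 := by omega
      have h2 : k - i < 1 := by omega
      rw [hu _ h1, hu _ h2, hv _ h1, hv _ h2, cdX_zero, cdZ_zero]; simp
  · intro u v _ _ hu hv k hk
    funext x z
    show (∑ᶠ i : ℤ, _) = (0 : ℝ → ℝ → ℝ) x z
    rw [finsum_eq_zero_of_forall_eq_zero]
    · rfl
    intro i
    by_cases hi : 0 < i
    · rw [hu i hi, hv i hi]; simp
    · push_neg at hi
      have h1 : 0 < k + 1 - i := by omega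
      have h2 : 0 < k - i := by omega
      rw [hu _ h1, hu _ h2, hv _ h1, hv _ h2, cdX_zero, cdZ_zero]; simp
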